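/- For n ≥ 2, let Z¹,…,Zⁿ: ℝ → ℝ be continuous with Zⁱ(0) = 0 for each i, and define A_n(y) = sup over chains -∞ < x_{n-1} ≤ x_{n-2} ≤ … ≤ x_1 ≤ y of Σ_{i=1}^{n-1} (Z^{i+1}(x_i) - Z^i(x_i)). If A_n(0) is finite, then D^{(n)}(Zⁿ, Z^{n-1}, …, Z¹)(y) = Z¹(y) + A_n(y) - A_n(0), where D^{(n)} is the n-fold iterated departure map. -/

import Mathlib

open Filter

/-- Queue length: `Q(Z,B)(y) = sup_{x ≤ y} [(B(y)-B(x)) - (Z(y)-Z(x))]`. -/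
noncomputable def Qmap (Z B : ℝ → ℝ) (y : ℝ) : ℝ :=
  sSup ((fun x => (B y - B x) - (Z y - Z x)) '' Set.Iic y)

/-- Departure map: `D(Z,B)(y) = Z(y) + Q(Z,B)(y) - Q(Z,B)(0)`. -/
noncomputable def Dmap (Z B : ℝ → ℝ) (y : ℝ) : ℝ :=
  Z y + Qmap Z B y - Qmap Z B 0

/-- Iterated departure map: with `Z i = Z^{i+1}`,
`Diter n Z = D^{(n+1)}(Z^{n+1}, …, Z^1) = D(D^{(n)}(Z^{n+1},…,Z^2), Z^1)`. -/
noncomputable def Diter : (n : ℕ) → (Fin (n + 1) → ℝ → ℝ) → ℝ → ℝ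
  | 0, Z => Z 0
  | n + 1, Z => Dmap (Diter n (fun i => Z i.succ)) (Z 0)

/-- `Achain n Z y` is the supremum over chains `-∞ < x_n ≤ … ≤ x_0 ≤ y` of
`∑_{j} (Z^{j+2}(x_j) - Z^{j+1}(x_j))` (with `Z j = Z^{j+1}`, `n+2` functions in total). -/
noncomputable def Achain (n : ℕ) (Z : Fin (n + 2) → ℝ → ℝ) (y : ℝ) : ℝ :=
  sSup {s : ℝ | ∃ x : Fin (n + 1) → ℝ, Antitone x ∧ x 0 ≤ y ∧
    s = ∑ j : Fin (n + 1), (Z j.succ (x j) - Z j.castSucc (x j))}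

/-- The set whose supremum defines `Achain`. -/
def SA (n : ℕ) (Z : Fin (n + 2) → ℝ → ℝ) (y : ℝ) : Set ℝ :=
  {s : ℝ | ∃ x : Fin (n + 1) → ℝ, Antitone x ∧ x 0 ≤ y ∧
    s = ∑ j : Fin (n + 1), (Z j.succ (x j) - Z j.castSucc (x j))}

lemma Achain_eq (n : ℕ) (Z : Fin (n + 2) → ℝ → ℝ) (y : ℝ) :
    Achain n Z y = sSup (SA n Z y) := rfl

lemma SA_nonempty (n : ℕ) (Z : Fin (n + 2) → ℝ → ℝ) (y : ℝ) :
    (SA n Z y).Nonempty :=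
  ⟨_, fun _ => y, antitone_const, le_refl y, rfl⟩

lemma SA_mono (n : ℕ) (Z : Fin (n + 2) → ℝ → ℝ) {y y' : ℝ} (h : y ≤ y') :
    SA n Z y ⊆ SA n Z y' := by
  rintro s ⟨x, hx, hx0, hs⟩
  exact ⟨x, hx, hx0.trans h, hs⟩

/-- Boundedness of `SA` at every point, given boundedness at `0`. -/
lemma SA_bddAbove (n : ℕ) (Z : Fin (n + 2) → ℝ → ℝ)
    (hcont : ∀ i, Continuous (Z i)) (h0 : ∀ i, Z i 0 = 0)
    (hfin : BddAbove (SA n Z 0)) (y : ℝ) : BddAbove (SA n Z y) := by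
  obtain ⟨B0, hB0⟩ := hfin
  set b : ℝ := max y 0 with hb
  have hM : ∀ i : Fin (n + 2), ∃ M : ℝ, ∀ t ∈ Set.Icc (0 : ℝ) b, |Z i t| ≤ M := by
    intro i
    obtain ⟨C, hC⟩ := isCompact_Icc.exists_bound_of_continuousOn (hcont i).continuousOn
    exact ⟨C, fun t ht => by simpa using hC t ht⟩
  choose M hMle using hM
  set Mt : ℝ := ∑ i : Fin (n + 2), |M i| with hMt
  have hMt0 : 0 ≤ Mt := Finset.sum_nonneg fun i _ => abs_nonneg _
  have hMtle : ∀ i : Fin (n + 2), ∀ t ∈ Set.Icc (0 : ℝ) b, |Z i t| ≤ Mt := by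
    intro i t ht
    refine (hMle i t ht).trans ((le_abs_self _).trans ?_)
    exact Finset.single_le_sum (fun j _ => abs_nonneg (M j)) (Finset.mem_univ i)
  refine ⟨B0 + (n + 1) * (2 * Mt), ?_⟩
  rintro s ⟨x, hx, hx0, rfl⟩
  set x' : Fin (n + 1) → ℝ := fun j => min (x j) 0 with hx'
  have hx'anti : Antitone x' := hx.min antitone_const
  have hx'0 : x' 0 ≤ 0 := min_le_right _ _
  have hmem : (∑ j : Fin (n + 1), (Z j.succ (x' j) - Z j.castSucc (x' j))) ∈ SA n Z 0 :=
    ⟨x', hx'anti, hx'0, rfl⟩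
  have hs' := hB0 hmem
  have hterm : ∀ j : Fin (n + 1),
      Z j.succ (x j) - Z j.castSucc (x j) ≤ (Z j.succ (x' j) - Z j.castSucc (x' j)) + 2 * Mt := by
    intro j
    by_cases hj : x j ≤ 0
    · have : x' j = x j := min_eq_left hj
      rw [this]; linarith
    · push_neg at hj
      have hxj : x j ∈ Set.Icc (0 : ℝ) b := by
        constructor
        · exact le_of_lt hj
        · exact le_trans (le_trans (hx (Fin.zero_le j)) hx0) (le_max_left _ _)
      have h1 := hMtle j.succ _ hxj
      have h2 := hMtle j.castSucc _ hxj
      have hx'j : x' j = 0 := min_eq_right (le_of_lt hj)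
      rw [hx'j, h0 j.succ, h0 j.castSucc]
      have := abs_le.mp h1
      have := abs_le.mp h2
      cases abs_le.mp h1 with
      | intro ha hb => cases abs_le.mp h2 with
        | intro hc hd => linarith
  calc ∑ j : Fin (n + 1), (Z j.succ (x j) - Z j.castSucc (x j))
      ≤ ∑ j : Fin (n + 1), ((Z j.succ (x' j) - Z j.castSucc (x' j)) + 2 * Mt) :=
        Finset.sum_le_sum fun j _ => hterm j
    _ = (∑ j : Fin (n + 1), (Z j.succ (x' j) - Z j.castSucc (x' j))) + (n + 1) * (2 * Mt) := by
        rw [Finset.sum_add_distrib, Finset.sum_const, Finset.card_univ, Fintype.card_fin,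
          nsmul_eq_mul]
        push_cast
        ring
    _ ≤ B0 + (n + 1) * (2 * Mt) := by linarith

/-- `Fin.cons` of an antitone chain is antitone. -/
lemma antitone_fin_cons {n : ℕ} {u : Fin (n + 1) → ℝ} (hu : Antitone u) {x : ℝ}
    (hx : u 0 ≤ x) : Antitone (Fin.cons x u : Fin (n + 2) → ℝ) := by
  intro i j hij
  induction j using Fin.cases with
  | zero =>
    have : i = 0 := le_antisymm hij (Fin.zero_le i)
    subst this; exact le_refl _
  | succ k =>
    induction i using Fin.cases with
    | zero =>
      simp only [Fin.cons_succ, Fin.cons_zero]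
      exact (hu (Fin.zero_le k)).trans hx
    | succ m =>
      simp only [Fin.cons_succ]
      exact hu (by exact_mod_cast Fin.succ_le_succ_iff.mp hij)

/-- Prepending a point to a chain. -/
lemma mem_SA_cons {n : ℕ} {Z : Fin (n + 3) → ℝ → ℝ} {x y s : ℝ} (hxy : x ≤ y)
    (hs : s ∈ SA n (fun i => Z i.succ) x) :
    (Z 1 x - Z 0 x) + s ∈ SA (n + 1) Z y := by
  obtain ⟨u, hu, hu0, rfl⟩ := hs
  refine ⟨Fin.cons x u, antitone_fin_cons hu hu0, by simpa using hxy, ?_⟩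
  symm
  rw [Fin.sum_univ_succ, Fin.cons_zero, Fin.succ_zero_eq_one, Fin.castSucc_zero]
  congr 1

lemma sSup_image_const_add (c : ℝ) (f : ℝ → ℝ) (s : Set ℝ) (hne : s.Nonempty)
    (hb : BddAbove (f '' s)) :
    sSup ((fun x => c + f x) '' s) = c + sSup (f '' s) := by
  have h1 : (fun x => c + f x) '' s = (fun t => c + t) '' (f '' s) := by
    rw [Set.image_image]
  obtain ⟨b, hbb⟩ := hb
  have hfne : (f '' s).Nonempty := hne.image f
  rw [h1]
  apply le_antisymm
  · apply csSup_le (hfne.image _)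
    rintro _ ⟨t, ht, rfl⟩
    exact add_le_add le_rfl (le_csSup ⟨b, hbb⟩ ht)
  · have hbi : BddAbove ((fun t => c + t) '' (f '' s)) := by
      refine ⟨c + b, ?_⟩
      rintro _ ⟨t, ht, rfl⟩
      exact add_le_add le_rfl (hbb ht)
    have h2 : sSup (f '' s) ≤ sSup ((fun t => c + t) '' (f '' s)) - c := by
      apply csSup_le hfne
      intro t ht
      have : c + t ≤ sSup ((fun t => c + t) '' (f '' s)) := le_csSup hbi ⟨t, ht, rfl⟩
      linarith
    linarith

/-- Upper bound for extended chains. -/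
lemma achain_cons_le (n : ℕ) (Z : Fin (n + 3) → ℝ → ℝ)
    (hbddA : ∀ y, BddAbove (SA (n + 1) Z y)) {x y : ℝ} (hxy : x ≤ y) :
    (Z 1 x - Z 0 x) + Achain n (fun i => Z i.succ) x ≤ Achain (n + 1) Z y := by
  have h : Achain n (fun i => Z i.succ) x ≤ Achain (n + 1) Z y - (Z 1 x - Z 0 x) := by
    rw [Achain_eq]
    apply csSup_le (SA_nonempty n _ x)
    intro s' hs'
    have hmem : (Z 1 x - Z 0 x) + s' ∈ SA (n + 1) Z y := mem_SA_cons hxy hs'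
    have h2 := le_csSup (hbddA y) hmem
    rw [Achain_eq]
    linarith
  linarith

/-- The key recursion for the chain supremum. -/
lemma key_sup (n : ℕ) (Z : Fin (n + 3) → ℝ → ℝ)
    (hbddA : ∀ y, BddAbove (SA (n + 1) Z y)) (y : ℝ) :
    sSup ((fun x => (Z 1 x - Z 0 x) + Achain n (fun i => Z i.succ) x) '' Set.Iic y)
      = Achain (n + 1) Z y := by
  set g : ℝ → ℝ := fun x => Z 1 x - Z 0 x with hg
  set A' : ℝ → ℝ := fun x => Achain n (fun i => Z i.succ) x with hA'
  -- SA' x is bounded above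
  have hSA'bdd : ∀ x : ℝ, BddAbove (SA n (fun i => Z i.succ) x) := by
    intro x
    obtain ⟨b, hb⟩ := hbddA x
    refine ⟨b - g x, ?_⟩
    intro s' hs'
    have h2 : (Z 1 x - Z 0 x) + s' ≤ b := hb (mem_SA_cons (le_refl x) hs')
    have hgx : g x = Z 1 x - Z 0 x := rfl
    linarith
  -- every element of the image set is ≤ Achain (n+1) Z y
  have hub : ∀ x ∈ Set.Iic y, g x + A' x ≤ Achain (n + 1) Z y := fun x hxy =>
    achain_cons_le n Z hbddA hxy
  apply le_antisymm
  · apply csSup_le ((Set.nonempty_Iic).image _)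
    rintro _ ⟨x, hxy, rfl⟩
    exact hub x hxy
  · rw [Achain_eq]
    apply csSup_le (SA_nonempty _ _ _)
    rintro s ⟨v, hv, hv0, rfl⟩
    set x : ℝ := v 0 with hxdef
    set u : Fin (n + 1) → ℝ := fun j => v j.succ with hu
    have huanti : Antitone u := fun i j hij => hv (Fin.succ_le_succ_iff.mpr hij)
    have hu0 : u 0 ≤ x := hv (Fin.zero_le _)
    have hs' : (∑ j : Fin (n + 1),
        ((fun i => Z i.succ) j.succ (u j) - (fun i => Z i.succ) j.castSucc (u j)))
        ∈ SA n (fun i => Z i.succ) x := ⟨u, huanti, hu0, rfl⟩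
    have hsplit : ∑ j : Fin (n + 2), (Z j.succ (v j) - Z j.castSucc (v j))
        = g x + ∑ j : Fin (n + 1),
          ((fun i => Z i.succ) j.succ (u j) - (fun i => Z i.succ) j.castSucc (u j)) := by
      rw [Fin.sum_univ_succ, Fin.succ_zero_eq_one, Fin.castSucc_zero]
      congr 1
    rw [hsplit]
    have h1 : (∑ j : Fin (n + 1),
        ((fun i => Z i.succ) j.succ (u j) - (fun i => Z i.succ) j.castSucc (u j))) ≤ A' x :=
      le_csSup (hSA'bdd x) hs'
    have hTbdd : BddAbove ((fun x => g x + A' x) '' Set.Iic y) := by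
      refine ⟨Achain (n + 1) Z y, ?_⟩
      rintro _ ⟨t, ht, rfl⟩
      exact hub t ht
    have h2 : g x + A' x ≤ sSup ((fun x => g x + A' x) '' Set.Iic y) :=
      le_csSup hTbdd ⟨x, hv0, rfl⟩
    linarith

/-- Main induction. -/
theorem main_aux : ∀ (n : ℕ) (Z : Fin (n + 2) → ℝ → ℝ),
    (∀ i, Continuous (Z i)) → (∀ i, Z i 0 = 0) → BddAbove (SA n Z 0) →
    ∀ y : ℝ, Diter (n + 1) Z y = Z 0 y + Achain n Z y - Achain n Z 0 := by
  intro n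
  induction n with
  | zero =>
    intro Z hcont h0 hfin y
    have hbdd := SA_bddAbove 0 Z hcont h0 hfin
    have hset : ∀ t : ℝ, (fun x => Z 1 x - Z 0 x) '' Set.Iic t = SA 0 Z t := by
      intro t
      ext s
      constructor
      · rintro ⟨x, hx, rfl⟩
        refine ⟨fun _ => x, antitone_const, hx, ?_⟩
        simp [Fin.sum_univ_one]
      · rintro ⟨x, hx, hx0, rfl⟩
        refine ⟨x 0, hx0, ?_⟩
        simp [Fin.sum_univ_one]
    have hQ : ∀ t : ℝ, Qmap (Z 1) (Z 0) t = (Z 0 t - Z 1 t) + Achain 0 Z t := by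
      intro t
      have hfn : (fun x => (Z 0 t - Z 0 x) - (Z 1 t - Z 1 x))
          = fun x => (Z 0 t - Z 1 t) + (Z 1 x - Z 0 x) := by
        funext x; ring
      rw [Qmap, hfn, sSup_image_const_add _ _ _ Set.nonempty_Iic (by rw [hset]; exact hbdd t)]
      rw [hset, Achain_eq]
    show Dmap (Z 1) (Z 0) y = Z 0 y + Achain 0 Z y - Achain 0 Z 0
    rw [Dmap, hQ, hQ, h0 0, h0 1]
    ring
  | succ n ih =>
    intro Z hcont h0 hfin y
    have hbdd := SA_bddAbove (n + 1) Z hcont h0 hfin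
    set Zt : Fin (n + 2) → ℝ → ℝ := fun i => Z i.succ with hZt
    have hSA'bdd0 : BddAbove (SA n Zt 0) := by
      obtain ⟨b, hb⟩ := hbdd 0
      refine ⟨b - (Z 1 0 - Z 0 0), ?_⟩
      intro s' hs'
      have h2 : (Z 1 0 - Z 0 0) + s' ≤ b := hb (mem_SA_cons (le_refl (0 : ℝ)) hs')
      linarith
    have ihW : ∀ x : ℝ, Diter (n + 1) Zt x = Z 1 x + Achain n Zt x - Achain n Zt 0 :=
      ih Zt (fun i => hcont i.succ) (fun i => h0 i.succ) hSA'bdd0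
    set W : ℝ → ℝ := Diter (n + 1) Zt with hW
    have hDiter : Diter (n + 2) Z = Dmap W (Z 0) := rfl
    have hQ : ∀ t : ℝ, Qmap W (Z 0) t
        = (Z 0 t - W t - Achain n Zt 0) + Achain (n + 1) Z t := by
      intro t
      have hfn : (fun x => (Z 0 t - Z 0 x) - (W t - W x))
          = fun x => (Z 0 t - W t - Achain n Zt 0) + ((Z 1 x - Z 0 x) + Achain n Zt x) := by
        funext x
        rw [ihW x]
        ring
      have hbddT : BddAbove ((fun x => (Z 1 x - Z 0 x) + Achain n Zt x) '' Set.Iic t) := by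
        refine ⟨Achain (n + 1) Z t, ?_⟩
        rintro _ ⟨x, hx, rfl⟩
        exact achain_cons_le n Z hbdd hx
      rw [Qmap, hfn, sSup_image_const_add _ _ _ Set.nonempty_Iic hbddT, key_sup n Z hbdd t]
    rw [hDiter, Dmap, hQ, hQ]
    have hW0 : W 0 = 0 := by
      rw [ihW 0, h0 1]; ring
    rw [ihW y, h0 0, hW0]
    ring

theorem stmt9 (n : ℕ) (Z : Fin (n + 2) → ℝ → ℝ)
    (hcont : ∀ i, Continuous (Z i)) (h0 : ∀ i, Z i 0 = 0)
    (hfin : BddAbove {s : ℝ | ∃ x : Fin (n + 1) → ℝ, Antitone x ∧ x 0 ≤ 0 ∧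
      s = ∑ j : Fin (n + 1), (Z j.succ (x j) - Z j.castSucc (x j))}) :
    ∀ y : ℝ, Diter (n + 1) Z y = Z 0 y + Achain n Z y - Achain n Z 0 := by
  exact main_aux n Z hcont h0 hfin
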